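/- Let n be a natural number, let E = EuclideanSpace ℝ (Fin n), let Y be a metric space, and let P : E → Y be a submetry. Fix y ∈ Y, set L = P ⁻¹' {y}, and assume L is nonempty. Then L is a set of positive reach in E: there exists an open set U ⊆ E with L ⊆ U such that for every x ∈ U there is a unique point p with p ∈ L and dist x p = Metric.infDist x L (a unique nearest point of L to x). -/
import Mathlib


/-- A map `P : X → Y` between metric spaces is a submetry if it maps every open
ball onto the open ball of the same radius around the image of the center. -/
def IsSubmetry {X Y : Type*} [MetricSpace X] [MetricSpace Y] (P : X → Y) : Prop :=
  ∀ (x : X) (r : ℝ), 0 < r → P '' Metric.ball x r = Metric.ball (P x) r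

open Metric
open scoped RealInnerProductSpace

section SubmetryAux

variable {n : ℕ} {Y : Type*} [MetricSpace Y] {P : EuclideanSpace ℝ (Fin n) → Y}

/-- A submetry is 1-Lipschitz. -/
private lemma submetry_dist_le (hP : IsSubmetry P) (x x' : EuclideanSpace ℝ (Fin n)) :
    dist (P x) (P x') ≤ dist x x' := by
  by_contra h
  push_neg at h
  have hr : 0 < dist (P x) (P x') := lt_of_le_of_lt dist_nonneg h
  have hx' : x' ∈ ball x (dist (P x) (P x')) := by
    rw [mem_ball, dist_comm]; exact h
  have himg : P x' ∈ ball (P x) (dist (P x) (P x')) := by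
    rw [← hP x _ hr]; exact ⟨x', hx', rfl⟩
  rw [mem_ball, dist_comm] at himg
  exact lt_irrefl _ himg

private lemma submetry_cont (hP : IsSubmetry P) : Continuous P :=
  (LipschitzWith.of_dist_le_mul (K := 1) fun a b => by
    simpa using submetry_dist_le hP a b).continuous

/-- Exact lifts: any point of `Y` can be lifted to a point at exactly the right distance. -/
private lemma submetry_lift (hP : IsSubmetry P) (x : EuclideanSpace ℝ (Fin n)) (Z : Y) :
    ∃ ζ, P ζ = Z ∧ dist x ζ = dist (P x) Z := by
  have hstep : ∀ j : ℕ, ∃ x', P x' = Z ∧ dist x x' < dist (P x) Z + 1 / (j + 1) := by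
    intro j
    have hr : 0 < dist (P x) Z + 1 / ((j : ℝ) + 1) := by positivity
    have hZ : Z ∈ ball (P x) (dist (P x) Z + 1 / ((j : ℝ) + 1)) := by
      rw [mem_ball, dist_comm]
      have : 0 < 1 / ((j : ℝ) + 1) := by positivity
      linarith
    rw [← hP x _ hr] at hZ
    obtain ⟨x', hx', hPx'⟩ := hZ
    refine ⟨x', hPx', ?_⟩
    rw [mem_ball] at hx'
    rw [dist_comm]; exact hx'
  choose u hu1 hu2 using hstep
  have hb : ∀ j, u j ∈ closedBall x (dist (P x) Z + 1) := by
    intro j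
    rw [mem_closedBall, dist_comm]
    have h1 : 1 / ((j : ℝ) + 1) ≤ 1 := by
      rw [div_le_one (by positivity)]
      have : (0 : ℝ) ≤ (j : ℝ) := Nat.cast_nonneg j
      linarith
    linarith [hu2 j]
  obtain ⟨ζ, -, φ, hφ, hconv⟩ :=
    (isCompact_closedBall x (dist (P x) Z + 1)).tendsto_subseq hb
  have hPζ : P ζ = Z := by
    have h1 : Filter.Tendsto (fun j => P (u (φ j))) Filter.atTop (nhds (P ζ)) :=
      ((submetry_cont hP).tendsto ζ).comp hconv
    have h2 : (fun j => P (u (φ j))) = fun _ => Z := funext fun j => hu1 _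
    rw [h2] at h1
    exact tendsto_nhds_unique h1 tendsto_const_nhds
  refine ⟨ζ, hPζ, le_antisymm ?_ ?_⟩
  · have hd : Filter.Tendsto (fun j => dist x (u (φ j))) Filter.atTop (nhds (dist x ζ)) :=
      tendsto_const_nhds.dist hconv
    have hub : ∀ j, dist x (u (φ j)) ≤ dist (P x) Z + 1 / ((j : ℝ) + 1) := by
      intro j
      refine le_trans (hu2 (φ j)).le ?_
      have h3 : 1 / ((φ j : ℝ) + 1) ≤ 1 / ((j : ℝ) + 1) := by
        apply one_div_le_one_div_of_le (by positivity)
        have : (j : ℝ) ≤ (φ j : ℝ) := by exact_mod_cast hφ.le_apply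
        linarith
      linarith
    have hlim : Filter.Tendsto (fun j : ℕ => dist (P x) Z + 1 / ((j : ℝ) + 1)) Filter.atTop
        (nhds (dist (P x) Z + 0)) :=
      tendsto_const_nhds.add tendsto_one_div_add_atTop_nhds_zero_nat
    have := le_of_tendsto_of_tendsto' hd hlim hub
    simpa using this
  · rw [← hPζ]; exact submetry_dist_le hP x ζ

/-- The distance to a fiber is computed in the base. -/
private lemma submetry_infDist_eq (hP : IsSubmetry P) {y : Y}
    {L : Set (EuclideanSpace ℝ (Fin n))} (hL : L = P ⁻¹' {y}) (hne : L.Nonempty)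
    (x : EuclideanSpace ℝ (Fin n)) : infDist x L = dist (P x) y := by
  refine le_antisymm ?_ ?_
  · obtain ⟨ζ, hPζ, hdζ⟩ := submetry_lift hP x y
    have hζL : ζ ∈ L := by rw [hL, Set.mem_preimage, hPζ]; rfl
    exact hdζ ▸ infDist_le_dist_of_mem hζL
  · by_contra h
    push_neg at h
    obtain ⟨p, hpL, hpd⟩ := (infDist_lt_iff hne).1 h
    have hPp : P p = y := by rw [hL] at hpL; exact hpL
    have h2 := submetry_dist_le hP x p
    rw [hPp] at h2
    linarith

/-- Parallelogram identity for the midpoint. -/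
private lemma par_aux (u p p' m : EuclideanSpace ℝ (Fin n))
    (hm : m = (2⁻¹ : ℝ) • (p + p')) :
    dist u p ^ 2 + dist u p' ^ 2 = 2 * (dist u m ^ 2 + dist m p ^ 2) := by
  have e1 : u - p = (u - m) + (m - p) := by abel
  have e2 : u - p' = (u - m) - (m - p) := by rw [hm]; module
  rw [dist_eq_norm u p, dist_eq_norm u p', dist_eq_norm u m, dist_eq_norm m p, e1, e2]
  have h := parallelogram_law_with_norm ℝ (u - m) (m - p)
  simp only [pow_two]
  linarith

/-- Key criticality inequality: if `m` is the midpoint of two points of the fiber `L`,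
then for every `Z` in the base, `dist y Z ^ 2 ≤ dist m p ^ 2 + dist (P m) Z ^ 2`. -/
private lemma submetry_key (hP : IsSubmetry P) {y : Y}
    {L : Set (EuclideanSpace ℝ (Fin n))} (hL : L = P ⁻¹' {y}) (hne : L.Nonempty)
    {p p' : EuclideanSpace ℝ (Fin n)} (hp : p ∈ L) (hp' : p' ∈ L)
    (m : EuclideanSpace ℝ (Fin n)) (hm : m = (2⁻¹ : ℝ) • (p + p')) (Z : Y) :
    dist y Z ^ 2 ≤ dist m p ^ 2 + dist (P m) Z ^ 2 := by
  obtain ⟨ζ, hPζ, hdζ⟩ := submetry_lift hP m Z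
  have h1 : dist y Z = infDist ζ L := by
    rw [submetry_infDist_eq hP hL hne ζ, hPζ, dist_comm]
  have h4 : dist y Z ≤ dist ζ p := h1 ▸ infDist_le_dist_of_mem hp
  have h5 : dist y Z ≤ dist ζ p' := h1 ▸ infDist_le_dist_of_mem hp'
  have hpar := par_aux ζ p p' m hm
  have h6 : dist ζ m = dist (P m) Z := by rw [dist_comm]; exact hdζ
  rw [h6] at hpar
  have h4' : dist y Z ^ 2 ≤ dist ζ p ^ 2 := pow_le_pow_left₀ dist_nonneg h4 2
  have h5' : dist y Z ^ 2 ≤ dist ζ p' ^ 2 := pow_le_pow_left₀ dist_nonneg h5 2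
  linarith

end SubmetryAux

set_option maxHeartbeats 2000000 in
/-- Fibers of a submetry from a Euclidean space have positive reach. -/
theorem fiber_of_submetry_positive_reach (n : ℕ) {Y : Type*} [MetricSpace Y]
    (P : EuclideanSpace ℝ (Fin n) → Y) (hP : IsSubmetry P) (y : Y)
    (L : Set (EuclideanSpace ℝ (Fin n))) (hL : L = P ⁻¹' {y}) (hne : L.Nonempty) :
    ∃ U : Set (EuclideanSpace ℝ (Fin n)), IsOpen U ∧ L ⊆ U ∧
      ∀ x ∈ U, ∃! p, p ∈ L ∧ dist x p = Metric.infDist x L := by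
  by_contra hcon
  push_neg at hcon
  obtain ⟨p₀, hp₀⟩ := hne
  have hPp₀ : P p₀ = y := by rw [hL] at hp₀; exact hp₀
  have hLne : L.Nonempty := ⟨p₀, hp₀⟩
  have hLclosed : IsClosed L := hL ▸ (isClosed_singleton.preimage (submetry_cont hP))
  -- Step: for every ε > 0 there is a "critical configuration" at scale < ε.
  have step : ∀ ε : ℝ, 0 < ε → ∃ s t ρ : ℝ, ∃ Q : Y, ∃ ξ : EuclideanSpace ℝ (Fin n),
      0 < s ∧ s ≤ t ∧ t < ε ∧ ρ ≤ t ∧ s ^ 2 ≤ 2 * t * ρ ∧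
      dist y Q = ρ ∧ dist p₀ ξ = ρ ∧ P ξ = Q ∧
      ∀ Z : Y, dist y Z ^ 2 ≤ s ^ 2 + dist Q Z ^ 2 := by
    intro ε hε
    obtain ⟨x, hxU, hxbad⟩ := hcon {x | infDist x L < ε}
      (isOpen_lt (continuous_infDist_pt L) continuous_const)
      (fun p hp => by
        simp only [Set.mem_setOf_eq, infDist_zero_of_mem hp]; exact hε)
    simp only [Set.mem_setOf_eq] at hxU
    obtain ⟨p, hpL, hpd⟩ := hLclosed.exists_infDist_eq_dist hLne x
    have h2fp : ∃ p', (p' ∈ L ∧ dist x p' = infDist x L) ∧ p' ≠ p := by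
      by_contra hno
      push_neg at hno
      exact hxbad ⟨p, ⟨hpL, hpd.symm⟩, fun q hq => hno q hq⟩
    obtain ⟨p', ⟨hp'L, hp'd⟩, hpp'⟩ := h2fp
    set t := infDist x L with ht
    set m : EuclideanSpace ℝ (Fin n) := (2⁻¹ : ℝ) • (p + p') with hm
    set s := dist m p with hs
    set ρ := infDist m L with hρ
    have hdxp : dist x p = t := hpd.symm
    have hdxp' : dist x p' = t := hp'd
    -- s = dist p p' / 2
    have hmp : m - p = (2⁻¹ : ℝ) • (p' - p) := by rw [hm]; module
    have hs_eq : s = dist p p' / 2 := by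
      rw [hs, dist_eq_norm m p, hmp, norm_smul, dist_eq_norm p p', ← norm_neg (p - p')]
      have : -(p - p') = p' - p := by abel
      rw [this, Real.norm_eq_abs, abs_of_pos (by norm_num : (0:ℝ) < 2⁻¹)]
      ring
    have hspos : 0 < s := by
      rw [hs_eq]
      have := dist_pos.2 (Ne.symm hpp')
      linarith
    have hst : s ≤ t := by
      have htri : dist p p' ≤ dist p x + dist x p' := dist_triangle p x p'
      rw [dist_comm p x, hdxp, hdxp'] at htri
      rw [hs_eq]; linarith
    have htpos : 0 < t := lt_of_lt_of_le hspos hst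
    -- parallelogram at x :  dist x m ^ 2 = t ^ 2 - s ^ 2
    have hparx := par_aux x p p' m hm
    rw [hdxp, hdxp'] at hparx
    have hdxm_sq : dist x m ^ 2 = t ^ 2 - s ^ 2 := by
      rw [← hs] at hparx; linarith
    -- the midpoint is not too close to L :  s ^ 2 ≤ 2 t ρ
    have hρ_ge : t ≤ ρ + dist x m :=
      le_trans infDist_le_infDist_add_dist (le_refl _)
    have hρt : ρ ≤ t := le_trans (infDist_le_dist_of_mem hpL) hst
    have hsq : s ^ 2 ≤ 2 * t * ρ := by
      have haux : 0 ≤ 2 * t * (ρ + dist x m - t) :=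
        mul_nonneg (by linarith) (by linarith)
      have haux2 := sq_nonneg (t - dist x m)
      nlinarith [haux, haux2, hdxm_sq]
    -- the Y-side data
    obtain ⟨ξ, hPξ, hdξ⟩ := submetry_lift hP p₀ (P m)
    have hyQ : dist y (P m) = ρ := by
      rw [hρ, submetry_infDist_eq hP hL hLne m, dist_comm]
    have hdξ' : dist p₀ ξ = ρ := by rw [hdξ, hPp₀, hyQ]
    exact ⟨s, t, ρ, P m, ξ, hspos, hst, hxU, hρt, hsq, hyQ, hdξ', hPξ,
      fun Z => submetry_key hP hL hLne hpL hp'L m hm Z⟩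
  -- choose the data
  choose sf tf ρf Qf ξf hs0 hst htε hρt hsq hyQ hdξ hPξ hkey using step
  have hρ0 : ∀ e he, 0 < ρf e he := by
    intro e he
    have h1 := hs0 e he
    have h2 := hst e he
    have h3 := hsq e he
    nlinarith
  -- the recursively defined scale sequence
  obtain ⟨g, hg⟩ : ∃ g : ℝ → ℝ, ∀ e (he : 0 < e), g e = ρf e he :=
    ⟨fun e => if he : 0 < e then ρf e he else 1, fun e he => dif_pos he⟩
  obtain ⟨F, hF0, hFs⟩ : ∃ F : ℕ → ℝ, F 0 = 1 ∧ ∀ k, F (k + 1) = min (g (F k)) (F k) / 2 :=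
    ⟨fun k => Nat.rec 1 (fun _ prev => min (g prev) prev / 2) k, rfl, fun _ => rfl⟩
  have hFpos : ∀ k, 0 < F k := by
    intro k
    induction k with
    | zero => rw [hF0]; norm_num
    | succ k ih =>
      rw [hFs, hg (F k) ih]
      have := hρ0 (F k) ih
      positivity
  -- abbreviations
  set S : ℕ → ℝ := fun k => sf (F k) (hFpos k) with hS
  set T : ℕ → ℝ := fun k => tf (F k) (hFpos k) with hT
  set R : ℕ → ℝ := fun k => ρf (F k) (hFpos k) with hR
  set QQ : ℕ → Y := fun k => Qf (F k) (hFpos k) with hQQ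
  set Ξ : ℕ → EuclideanSpace ℝ (Fin n) := fun k => ξf (F k) (hFpos k) with hΞ
  have hRpos : ∀ k, 0 < R k := fun k => hρ0 (F k) (hFpos k)
  -- monotonicity of the scales
  have hFle : ∀ k, F (k + 1) ≤ F k := by
    intro k
    rw [hFs]
    have h1 : min (g (F k)) (F k) ≤ F k := min_le_right _ _
    have := hFpos k
    linarith
  have hFanti : Antitone F := antitone_nat_of_succ_le hFle
  have hFρ : ∀ j k, j < k → F k ≤ R j / 2 := by
    intro j k hjk
    have h1 : F k ≤ F (j + 1) := hFanti hjk
    have h2 : F (j + 1) = min (g (F j)) (F j) / 2 := hFs j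
    rw [hg (F j) (hFpos j)] at h2
    have h3 : min (ρf (F j) (hFpos j)) (F j) ≤ ρf (F j) (hFpos j) := min_le_left _ _
    rw [h2] at h1
    have h4 : R j = ρf (F j) (hFpos j) := rfl
    rw [h4]
    linarith
  -- the unit directions
  set U : ℕ → EuclideanSpace ℝ (Fin n) := fun k => (R k)⁻¹ • (Ξ k - p₀) with hU
  have hΞnorm : ∀ k, ‖Ξ k - p₀‖ = R k := by
    intro k
    rw [← dist_eq_norm, dist_comm]
    exact hdξ (F k) (hFpos k)
  have hUnorm : ∀ k, ‖U k‖ = 1 := by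
    intro k
    show ‖(R k)⁻¹ • (Ξ k - p₀)‖ = 1
    rw [norm_smul, hΞnorm, Real.norm_eq_abs, abs_of_pos (inv_pos.2 (hRpos k)),
      inv_mul_cancel₀ (ne_of_gt (hRpos k))]
  -- separation of the directions
  have hsep : ∀ j k, j < k → (1/2 : ℝ) ≤ dist (U j) (U k) ^ 2 := by
    intro j k hjk
    have hρj := hRpos j
    have hρk := hRpos k
    -- criticality of instance k probed at the midpoint fiber of instance j
    have hk1 : R j ^ 2 ≤ S k ^ 2 + dist (QQ k) (QQ j) ^ 2 := by
      have h := hkey (F k) (hFpos k) (QQ j)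
      rwa [hyQ (F j) (hFpos j)] at h
    have hk2 : dist (QQ k) (QQ j) ≤ dist (Ξ k) (Ξ j) := by
      have h := submetry_dist_le hP (Ξ k) (Ξ j)
      have e1 : P (Ξ k) = QQ k := hPξ (F k) (hFpos k)
      have e2 : P (Ξ j) = QQ j := hPξ (F j) (hFpos j)
      rwa [e1, e2] at h
    have hk3 : R j ^ 2 - S k ^ 2 ≤ dist (Ξ k) (Ξ j) ^ 2 := by
      have h := pow_le_pow_left₀ dist_nonneg hk2 2
      linarith
    -- inner product bound
    have hsub : (Ξ j - p₀) - (Ξ k - p₀) = Ξ j - Ξ k := by abel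
    have hns := norm_sub_sq_real (Ξ j - p₀) (Ξ k - p₀)
    rw [hsub, hΞnorm j, hΞnorm k] at hns
    have hΞd : ‖Ξ j - Ξ k‖ = dist (Ξ k) (Ξ j) := by rw [dist_comm, dist_eq_norm]
    rw [hΞd] at hns
    have hinner : 2 * ⟪Ξ j - p₀, Ξ k - p₀⟫ ≤ R k ^ 2 + S k ^ 2 := by linarith
    -- scale comparisons
    have hTk : T k ≤ R j / 2 :=
      le_of_lt (lt_of_lt_of_le (htε (F k) (hFpos k)) (hFρ j k hjk))
    have hRk_T : R k ≤ T k := hρt (F k) (hFpos k)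
    have hSq : S k ^ 2 ≤ 2 * T k * R k := hsq (F k) (hFpos k)
    have hfinal : ⟪Ξ j - p₀, Ξ k - p₀⟫ ≤ 3/4 * (R j * R k) := by
      have hA : R k * R k ≤ T k * R k := mul_le_mul_of_nonneg_right hRk_T hρk.le
      have hB : T k * R k ≤ (R j / 2) * R k := mul_le_mul_of_nonneg_right hTk hρk.le
      nlinarith [hinner, hSq, hA, hB]
    have hUinner : ⟪U j, U k⟫ ≤ 3/4 := by
      show ⟪(R j)⁻¹ • (Ξ j - p₀), (R k)⁻¹ • (Ξ k - p₀)⟫ ≤ 3/4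
      rw [real_inner_smul_left, real_inner_smul_right, ← mul_assoc,
        show (R j)⁻¹ * (R k)⁻¹ = (R j * R k)⁻¹ by rw [mul_inv]]
      rw [inv_mul_le_iff₀ (mul_pos hρj hρk)]
      linarith [hfinal]
    have hdU : dist (U j) (U k) ^ 2 = 2 - 2 * ⟪U j, U k⟫ := by
      rw [dist_eq_norm, norm_sub_sq_real, hUnorm j, hUnorm k]; ring
    rw [hdU]; linarith
  -- compactness contradiction
  have hmem : ∀ k, U k ∈ closedBall (0 : EuclideanSpace ℝ (Fin n)) 1 := by
    intro k
    rw [mem_closedBall, dist_zero_right, hUnorm k]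
  obtain ⟨v, -, φ, hφ, hconv⟩ :=
    (isCompact_closedBall (0 : EuclideanSpace ℝ (Fin n)) 1).tendsto_subseq hmem
  obtain ⟨N, hN⟩ := Metric.tendsto_atTop.1 hconv (1/3) (by norm_num)
  have h1 := hN N le_rfl
  have h2 := hN (N + 1) (Nat.le_succ N)
  have hlt : φ N < φ (N + 1) := hφ (Nat.lt_succ_self N)
  have hd : dist (U (φ N)) (U (φ (N + 1))) < 2/3 := by
    calc dist (U (φ N)) (U (φ (N + 1)))
        ≤ dist (U (φ N)) v + dist v (U (φ (N + 1))) := dist_triangle _ _ _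
      _ < 1/3 + 1/3 := by
          rw [dist_comm v]
          exact add_lt_add h1 h2
      _ = 2/3 := by norm_num
  have hsep' := hsep (φ N) (φ (N + 1)) hlt
  nlinarith [dist_nonneg (x := U (φ N)) (y := U (φ (N + 1)))]
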